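/- Let H be a finite group with a normal subgroup U, and let K_1, …, K_k ≤ U be k distinct normal subgroups of H such that each quotient U/K_i is a chief factor of H (i.e., a minimal normal subgroup of H/K_i contained in U/K_i with no intermediate H-invariant subgroup). If for each i one has K_i ⊉ ∩_{j≠i} K_j, then the diagonal homomorphism U → ∏_{i=1}^k U/K_i induces an isomorphism U/(∩_i K_i) ≅ ∏_{i=1}^k U/K_i. -/

import Mathlib

open scoped Pointwise

theorem aux_surj_of_chief {H : Type*} [Group H] (U : Subgroup H) (hU : U.Normal)
    (n : ℕ) :
    ∀ {ι : Type} [Fintype ι] [DecidableEq ι] (_hcard : Fintype.card ι = n)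
    (K : ι → Subgroup H)
    (_hKU : ∀ i, K i < U) (hKn : ∀ i, (K i).Normal)
    (_hchief : ∀ i, ∀ Z : Subgroup H, Z.Normal → K i < Z → Z < U → False)
    (_hC2 : ∀ i, ¬ ((⨅ j ∈ ({i}ᶜ : Set ι), K j) ≤ K i)),
    Function.Surjective
      (Pi.monoidHom (fun i : ι =>
        QuotientGroup.mk' ((K i).subgroupOf U)) : ↥U →* Π i, ↥U ⧸ (K i).subgroupOf U) := by
  induction n with
  | zero =>
    intro ι _ _ hcard K hKU hKn hchief hC2 y
    have hempty : IsEmpty ι := Fintype.card_eq_zero_iff.mp hcard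
    exact ⟨1, funext fun i => hempty.elim i⟩
  | succ n ih =>
    intro ι _ _ hcard K hKU hKn hchief hC2 y
    have hne : Nonempty ι := Fintype.card_pos_iff.mp (by omega)
    obtain ⟨i0⟩ := hne
    have hcard' : Fintype.card {j : ι // j ≠ i0} = n := by
      have := Fintype.card_subtype_compl (· = i0)
      simp only [Fintype.card_subtype_eq] at this
      have h2 : Fintype.card {j : ι // ¬ j = i0} = Fintype.card {j : ι // j ≠ i0} := rfl
      omega
    -- condition C2 for the restricted family
    have hC2' : ∀ j : {l : ι // l ≠ i0},
        ¬ ((⨅ l ∈ ({j}ᶜ : Set {l : ι // l ≠ i0}), K l.val) ≤ K j.val) := by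
      intro j hle
      refine hC2 j.val (le_trans (le_trans ?_ hle) le_rfl)
      refine le_iInf₂ fun l hl => ?_
      exact iInf₂_le l.val (fun e => hl (Subtype.ext e))
    obtain ⟨u, hu⟩ := ih hcard' (fun j => K j.val) (fun j => hKU _) (fun j => hKn _)
      (fun j => hchief _) hC2' (fun j => y j.val)
    -- the intersection of the other K's
    set M : Subgroup H := ⨅ l ∈ ({i0}ᶜ : Set ι), K l with hM
    have hMn : M.Normal := by
      constructor
      intro x hx g
      simp only [hM, Subgroup.mem_iInf] at hx ⊢
      intro l hl
      exact (hKn l).conj_mem x (hx l hl) g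
    have hM'n : (M ⊓ U).Normal :=
      ⟨fun x hx g => Subgroup.mem_inf.mpr
        ⟨hMn.conj_mem x (Subgroup.mem_inf.mp hx).1 g,
         hU.conj_mem x (Subgroup.mem_inf.mp hx).2 g⟩⟩
    have hnot : ¬ (M ⊓ U ≤ K i0) := by
      by_cases hex : ∃ l, l ≠ i0
      · obtain ⟨l, hl⟩ := hex
        have hMU : M ≤ U := le_trans (iInf₂_le l hl) (hKU l).le
        rw [inf_eq_left.mpr hMU]
        exact hC2 i0
      · push_neg at hex
        have hUM : U ≤ M := le_iInf₂ fun l hl => absurd (hex l) hl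
        rw [inf_eq_right.mpr hUM]
        exact not_le_of_gt (hKU i0)
    have hlt : K i0 < M ⊓ U ⊔ K i0 :=
      lt_of_le_of_ne le_sup_right (fun h => hnot (by rw [h]; exact le_sup_left))
    have hsup_le : M ⊓ U ⊔ K i0 ≤ U := sup_le inf_le_right (hKU i0).le
    haveI := hKn i0
    haveI := hM'n
    have hsupN : (M ⊓ U ⊔ K i0).Normal := Subgroup.sup_normal _ _
    have hsup_eq : M ⊓ U ⊔ K i0 = U := by
      rcases hsup_le.lt_or_eq with h | h
      · exact (hchief i0 _ hsupN hlt h).elim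
      · exact h
    -- adjust the i0 component
    set z : ↥U ⧸ (K i0).subgroupOf U :=
      y i0 * (QuotientGroup.mk' ((K i0).subgroupOf U) u)⁻¹ with hz
    obtain ⟨w, hw⟩ := QuotientGroup.mk'_surjective ((K i0).subgroupOf U) z
    have hwmem : (w : H) ∈ M ⊓ U ⊔ K i0 := by rw [hsup_eq]; exact w.2
    have hwmul : (w : H) ∈ ((M ⊓ U : Subgroup H) : Set H) * ((K i0 : Subgroup H) : Set H) := by
      rw [← Subgroup.mul_normal (M ⊓ U) (K i0)]
      exact hwmem
    obtain ⟨m, hm, c, hc, hmc⟩ := hwmul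
    have hmU : m ∈ U := (Subgroup.mem_inf.mp hm).2
    set mh : ↥U := ⟨m, hmU⟩ with hmh
    have hmkw : QuotientGroup.mk' ((K i0).subgroupOf U) mh
        = QuotientGroup.mk' ((K i0).subgroupOf U) w := by
      apply (QuotientGroup.mk'_eq_mk' _).mpr
      have hcu : c ∈ U := by
        have : c = m⁻¹ * (w : H) := by rw [← hmc]; group
        rw [this]; exact U.mul_mem (U.inv_mem hmU) w.2
      refine ⟨⟨c, hcu⟩, ?_, ?_⟩
      · simpa [Subgroup.mem_subgroupOf] using hc
      · ext
        simpa using hmc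
    refine ⟨mh * u, funext fun i => ?_⟩
    by_cases hi : i = i0
    · subst hi
      simp only [Pi.monoidHom, MonoidHom.pi_apply, map_mul, Pi.mul_apply]
      rw [hmkw, hw, hz]
      group
    · have hmK : m ∈ K i := (iInf₂_le i hi : M ≤ K i) (Subgroup.mem_inf.mp hm).1
      have h1 : QuotientGroup.mk' ((K i).subgroupOf U) mh = 1 := by
        rw [QuotientGroup.mk'_apply, QuotientGroup.eq_one_iff]
        simpa [Subgroup.mem_subgroupOf] using hmK
      have := congrFun hu ⟨i, hi⟩
      simp only [Pi.monoidHom, MonoidHom.pi_apply, map_mul, Pi.mul_apply] at this ⊢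
      rw [h1, one_mul, this]

theorem diagonal_iso_of_chief_factors {H : Type*} [Group H] [Finite H]
    (U : Subgroup H) (hU : U.Normal) (k : ℕ) (K : Fin k → Subgroup H)
    (hinj : Function.Injective K)
    (hKU : ∀ i, K i < U)
    (hKnormal : ∀ i, (K i).Normal)
    (hchief : ∀ i, ∀ Z : Subgroup H, Z.Normal → K i < Z → Z < U → False)
    (hC2 : ∀ i, ¬ ((⨅ j ∈ ({i}ᶜ : Set (Fin k)), K j) ≤ K i)) :
    Function.Surjective
      (Pi.monoidHom (fun i : Fin k =>
        QuotientGroup.mk' ((K i).subgroupOf U)) : ↥U →* Π i, ↥U ⧸ (K i).subgroupOf U) ∧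
    (Pi.monoidHom (fun i : Fin k =>
        QuotientGroup.mk' ((K i).subgroupOf U))).ker = (⨅ i, K i).subgroupOf U := by
  constructor
  · exact aux_surj_of_chief U hU (Fintype.card (Fin k)) rfl K hKU hKnormal hchief hC2
  · ext x
    simp [Pi.monoidHom, MonoidHom.pi_apply, MonoidHom.mem_ker, funext_iff, Subgroup.mem_subgroupOf, Subgroup.mem_iInf,
      QuotientGroup.eq_one_iff]
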